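/- For every probability distribution F on [0,1], every positive integer m, and every real p ≥ 1, the L_p distance between the binomial mixture CDF and F satisfies (∫_0^1 |F^{(m)}(x) − F(x)|^p dx)^{1/p} ≤ (2π)^{1/(2p)} / (mp)^{1/(2p)}. -/

import Mathlib

open MeasureTheory ProbabilityTheory Real

noncomputable section

/-- pmf of Binomial(m, s) at k. -/
def binomPMFr (m k : ℕ) (s : ℝ) : ℝ := (m.choose k : ℝ) * s ^ k * (1 - s) ^ (m - k)

/-- Law of ŝ = X/m where X ~ Binomial(m, s). -/
def binomLaw (m : ℕ) (s : ℝ) : Measure ℝ :=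
  ∑ k ∈ Finset.range (m + 1), ENNReal.ofReal (binomPMFr m k s) • Measure.dirac ((k : ℝ) / m)

/-- Binomial-mixture law of ŝ where s ~ μ. -/
def mixLaw (μ : Measure ℝ) (m : ℕ) : Measure ℝ := μ.bind (binomLaw m)

/-- CDF of a measure. -/
def cdfOf (μ : Measure ℝ) (x : ℝ) : ℝ := (μ (Set.Iic x)).toReal

open Finset

lemma binomPMFr_def (m k : ℕ) (s : ℝ) :
    binomPMFr m k s = (m.choose k : ℝ) * s ^ k * (1 - s) ^ (m - k) := rfl

lemma binomPMFr_nonneg {m k : ℕ} {s : ℝ} (h0 : 0 ≤ s) (h1 : s ≤ 1) :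
    0 ≤ binomPMFr m k s := by
  unfold binomPMFr
  have : (0:ℝ) ≤ 1 - s := by linarith
  positivity

lemma binomPMFr_sum (m : ℕ) (s : ℝ) :
    ∑ k ∈ range (m + 1), binomPMFr m k s = 1 := by
  have h := add_pow s (1 - s) m
  have h2 : s + (1 - s) = 1 := by ring
  rw [h2, one_pow] at h
  rw [h]
  exact Finset.sum_congr rfl fun k _ => by unfold binomPMFr; ring

lemma log_bound {v : ℝ} (h0 : 0 ≤ v) (h1 : v < 1) :
    v + v ^ 2 / 2 ≤ -Real.log (1 - v) := by
  have habs : |v| < 1 := by rw [abs_of_nonneg h0]; exact h1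
  have hs := Real.hasSum_pow_div_log_of_abs_lt_one habs
  have := sum_le_hasSum (Finset.range 2)
    (fun i _ => by positivity) hs
  have h2 : ∑ i ∈ Finset.range 2, v ^ (i + 1) / (↑i + 1) = v + v ^ 2 / 2 := by
    simp [Finset.sum_range_succ]; ring
  linarith [h2 ▸ this]

lemma keyA {s x : ℝ} (hs : 0 < s) (hsx : s ≤ x) (hx : x ≤ 1) :
    (x - s) + (x - s) ^ 2 / 2 ≤ x * Real.log (x / s) := by
  have hx0 : 0 < x := lt_of_lt_of_le hs hsx
  set v : ℝ := (x - s) / x with hv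
  have hv0 : 0 ≤ v := by apply div_nonneg <;> linarith
  have hv1 : v < 1 := by rw [div_lt_one hx0]; linarith
  have hlog : Real.log (x / s) = -Real.log (1 - v) := by
    have : 1 - v = s / x := by rw [hv]; field_simp; ring
    rw [this, Real.log_div (by positivity) (by positivity),
      Real.log_div (by positivity) (by positivity)]
    ring
  have hb := log_bound hv0 hv1
  have h1 : x * (v + v ^ 2 / 2) ≤ x * (-Real.log (1 - v)) :=
    mul_le_mul_of_nonneg_left hb hx0.le
  rw [← hlog] at h1
  refine le_trans ?_ h1
  have hxv : x * v = x - s := by rw [hv]; field_simp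
  have hxv2 : x * (v ^ 2 / 2) = (x - s) ^ 2 / (2 * x) := by
    rw [hv]; field_simp
  have h2 : (x - s) ^ 2 / 2 ≤ (x - s) ^ 2 / (2 * x) := by
    apply div_le_div_of_nonneg_left (by positivity) (by positivity) (by linarith)
  calc x - s + (x - s) ^ 2 / 2 ≤ (x - s) + (x - s) ^ 2 / (2 * x) := by linarith
    _ = x * (v + v ^ 2 / 2) := by rw [mul_add, hxv, hxv2]

lemma tail_ub (m : ℕ) (hm : 0 < m) {s x : ℝ} (hs0 : 0 ≤ s) (hsx : s ≤ x) (hx1 : x ≤ 1) :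
    ∑ k ∈ range (m + 1), binomPMFr m k s * (if x ≤ (k : ℝ) / m then 1 else 0)
      ≤ Real.exp (-(m * (x - s) ^ 2) / 2) := by
  have hs1 : s ≤ 1 := le_trans hsx hx1
  have hm0 : (0:ℝ) < m := by exact_mod_cast hm
  rcases eq_or_lt_of_le hsx with heq | hlt
  · have h1 : ∑ k ∈ range (m + 1), binomPMFr m k s * (if x ≤ (k : ℝ) / m then 1 else 0)
        ≤ ∑ k ∈ range (m + 1), binomPMFr m k s := by
      apply Finset.sum_le_sum
      intro k _
      have h := binomPMFr_nonneg (m := m) (k := k) hs0 hs1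
      split <;> simp [h]
    rw [binomPMFr_sum] at h1
    refine h1.trans ?_
    rw [← heq]
    simp
  · rcases eq_or_lt_of_le hs0 with hseq | hspos
    · have hx0 : 0 < x := by rw [← hseq] at hlt; exact hlt
      have hz : ∀ k ∈ range (m + 1), binomPMFr m k s * (if x ≤ (k : ℝ) / m then 1 else 0) = 0 := by
        intro k _
        rcases Nat.eq_zero_or_pos k with hk | hk
        · subst hk
          simp only [Nat.cast_zero, zero_div]
          rw [if_neg (not_le.mpr hx0), mul_zero]
        · have : binomPMFr m k s = 0 := by
            rw [binomPMFr_def, ← hseq, zero_pow (by omega)]; ring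
          simp [this]
      rw [Finset.sum_eq_zero hz]
      positivity
    · set L : ℝ := Real.log (x / s) with hL
      have hx0 : 0 < x := lt_trans hspos hlt
      have hL0 : 0 ≤ L := Real.log_nonneg (by rw [le_div_iff₀ hspos]; linarith)
      have hE : Real.exp L = x / s := Real.exp_log (by positivity)
      have step1 : ∑ k ∈ range (m + 1), binomPMFr m k s * (if x ≤ (k : ℝ) / m then 1 else 0)
          ≤ ∑ k ∈ range (m + 1), binomPMFr m k s * Real.exp (L * ((k:ℝ) - m * x)) := by
        apply Finset.sum_le_sum
        intro k _
        have hp := binomPMFr_nonneg (m := m) (k := k) hs0 hs1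
        split
        · rename_i h
          have hk : m * x ≤ (k:ℝ) := by
            rw [le_div_iff₀ hm0] at h; linarith
          have h1 : (1:ℝ) ≤ Real.exp (L * ((k:ℝ) - m * x)) := by
            apply Real.one_le_exp
            apply mul_nonneg hL0; linarith
          nlinarith
        · simpa using mul_nonneg hp (Real.exp_nonneg _)
      have step2 : ∀ k ∈ range (m + 1), binomPMFr m k s * Real.exp (L * ((k:ℝ) - m * x))
          = Real.exp (-(L * m * x)) * (x ^ k * (1 - s) ^ (m - k) * (m.choose k : ℝ)) := by
        intro k _
        have e1 : Real.exp (L * ((k:ℝ) - m * x)) = Real.exp ((k:ℝ) * L) * Real.exp (-(L * m * x)) := by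
          rw [← Real.exp_add]; ring_nf
        have e2 : Real.exp ((k:ℝ) * L) = (x / s) ^ k := by rw [Real.exp_nat_mul, hE]
        have e3 : s ^ k * (x / s) ^ k = x ^ k := by
          rw [← mul_pow, mul_div_cancel₀ _ (ne_of_gt hspos)]
        calc binomPMFr m k s * Real.exp (L * ((k:ℝ) - m * x))
            = (s ^ k * (x / s) ^ k) * ((m.choose k : ℝ) * (1 - s) ^ (m - k)
               * Real.exp (-(L * m * x))) := by rw [binomPMFr_def, e1, e2]; ring
          _ = _ := by rw [e3]; ring
      refine step1.trans ?_
      rw [Finset.sum_congr rfl step2, ← Finset.mul_sum, ← add_pow]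
      have step4 : (x + (1 - s)) ^ m ≤ Real.exp ((m:ℝ) * (x - s)) := by
        have h1 : x + (1 - s) = (x - s) + 1 := by ring
        have h2 : (x - s) + 1 ≤ Real.exp (x - s) := Real.add_one_le_exp _
        rw [h1, Real.exp_nat_mul]
        apply pow_le_pow_left₀ (by linarith) h2
      have step5 : Real.exp (-(L * m * x)) * (x + (1 - s)) ^ m
          ≤ Real.exp (-(L * m * x)) * Real.exp ((m:ℝ) * (x - s)) :=
        mul_le_mul_of_nonneg_left step4 (Real.exp_nonneg _)
      refine step5.trans ?_
      rw [← Real.exp_add]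
      apply Real.exp_le_exp.mpr
      have hk := keyA hspos hsx hx1
      nlinarith [mul_le_mul_of_nonneg_left hk hm0.le]

def gFn (m : ℕ) (s x : ℝ) : ℝ :=
  ∑ k ∈ range (m + 1), binomPMFr m k s * (if (k : ℝ) / m ≤ x then 1 else 0)

lemma gFn_nonneg {m : ℕ} {s x : ℝ} (hs0 : 0 ≤ s) (hs1 : s ≤ 1) : 0 ≤ gFn m s x := by
  apply Finset.sum_nonneg
  intro k _
  have := binomPMFr_nonneg (m := m) (k := k) hs0 hs1
  split <;> simp [this]

lemma gFn_le_one {m : ℕ} {s x : ℝ} (hs0 : 0 ≤ s) (hs1 : s ≤ 1) : gFn m s x ≤ 1 := by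
  have h : gFn m s x ≤ ∑ k ∈ range (m + 1), binomPMFr m k s := by
    apply Finset.sum_le_sum
    intro k _
    have := binomPMFr_nonneg (m := m) (k := k) hs0 hs1
    split <;> simp [this]
  rwa [binomPMFr_sum] at h

lemma gFn_mono {m : ℕ} {s : ℝ} (hs0 : 0 ≤ s) (hs1 : s ≤ 1) : Monotone (gFn m s) := by
  intro a b hab
  apply Finset.sum_le_sum
  intro k _
  have hpk := binomPMFr_nonneg (m := m) (k := k) hs0 hs1
  by_cases h : (k : ℝ) / m ≤ a
  · rw [if_pos h, if_pos (le_trans h hab)]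
  · rw [if_neg h]
    split <;> simp [hpk]

lemma tail_lb (m : ℕ) (hm : 0 < m) {s x : ℝ} (hs1 : s ≤ 1) (hx0 : 0 ≤ x) (hxs : x ≤ s) :
    gFn m s x ≤ Real.exp (-(m * (s - x) ^ 2) / 2) := by
  have hm0 : (0:ℝ) < m := by exact_mod_cast hm
  have hrefl : gFn m s x = ∑ j ∈ range (m + 1),
      binomPMFr m (m - j) s * (if ((m - j : ℕ) : ℝ) / m ≤ x then 1 else 0) := by
    rw [gFn]
    rw [← Finset.sum_range_reflect
      (fun k => binomPMFr m k s * (if (k : ℝ) / m ≤ x then 1 else 0)) (m + 1)]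
    apply Finset.sum_congr rfl
    intro j hj
    simp only [Nat.add_sub_cancel]
  have hterm : ∀ j ∈ range (m + 1),
      binomPMFr m (m - j) s * (if ((m - j : ℕ) : ℝ) / m ≤ x then 1 else 0)
      = binomPMFr m j (1 - s) * (if (1 - x) ≤ (j : ℝ) / m then 1 else 0) := by
    intro j hj
    have hjm : j ≤ m := by simp at hj; omega
    have h1 : binomPMFr m (m - j) s = binomPMFr m j (1 - s) := by
      rw [binomPMFr_def, binomPMFr_def, Nat.choose_symm hjm, Nat.sub_sub_self hjm]
      ring_nf
    have h2 : (((m - j : ℕ) : ℝ) / m ≤ x) ↔ ((1 - x) ≤ (j : ℝ) / m) := by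
      rw [Nat.cast_sub hjm, div_le_iff₀ hm0, le_div_iff₀ hm0]
      constructor <;> intro <;> linarith
    rw [h1]
    congr 1
    simp only [h2]
  rw [hrefl, Finset.sum_congr rfl hterm]
  have := tail_ub m hm (s := 1 - s) (x := 1 - x) (by linarith) (by linarith) (by linarith)
  have heq : (1 - x - (1 - s)) ^ 2 = (s - x) ^ 2 := by ring
  rwa [heq] at this

lemma pointwise_bound (m : ℕ) (hm : 0 < m) {s x : ℝ} (hs0 : 0 ≤ s) (hs1 : s ≤ 1)
    (hx0 : 0 ≤ x) (hx1 : x ≤ 1) :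
    |gFn m s x - (if s ≤ x then 1 else 0)| ≤ Real.exp (-(m * (x - s) ^ 2) / 2) := by
  by_cases h : s ≤ x
  · rw [if_pos h]
    rw [abs_of_nonpos (by linarith [gFn_le_one (m := m) (s := s) (x := x) hs0 hs1])]
    have hup : 1 - gFn m s x
        ≤ ∑ k ∈ range (m + 1), binomPMFr m k s * (if x ≤ (k : ℝ) / m then 1 else 0) := by
      have h1 : ∑ k ∈ range (m + 1),
          binomPMFr m k s * (1 - (if (k : ℝ) / m ≤ x then 1 else 0)) = 1 - gFn m s x := by
        rw [gFn]
        have hc : ∀ k ∈ range (m + 1), binomPMFr m k s * (1 - (if (k : ℝ) / m ≤ x then 1 else 0))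
            = binomPMFr m k s - binomPMFr m k s * (if (k : ℝ) / m ≤ x then 1 else 0) :=
          fun k _ => by ring
        rw [Finset.sum_congr rfl hc, Finset.sum_sub_distrib, binomPMFr_sum]
      rw [← h1]
      apply Finset.sum_le_sum
      intro k _
      have hp := binomPMFr_nonneg (m := m) (k := k) hs0 hs1
      by_cases hc : (k : ℝ) / m ≤ x
      · rw [if_pos hc]
        simp only [sub_self, mul_zero]
        split <;> simp [hp]
      · rw [if_neg hc, if_pos (le_of_lt (not_le.mp hc))]
        norm_num
    have := tail_ub m hm hs0 h hx1
    have hfin : -(gFn m s x - 1) = 1 - gFn m s x := by ring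
    rw [hfin]
    exact hup.trans this
  · rw [if_neg h, sub_zero, abs_of_nonneg (gFn_nonneg hs0 hs1)]
    have := tail_lb m hm hs1 hx0 (le_of_lt (not_le.mp h))
    have heq : (s - x) ^ 2 = (x - s) ^ 2 := by ring
    rwa [heq] at this

lemma binomLaw_measurable (m : ℕ) : Measurable (binomLaw m) := by
  apply Measure.measurable_of_measurable_coe
  intro A hA
  simp only [binomLaw, Measure.finset_sum_apply, Measure.smul_apply, smul_eq_mul]
  apply Finset.measurable_sum
  intro k _
  apply Measurable.mul ?_ measurable_const
  apply ENNReal.measurable_ofReal.comp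
  unfold binomPMFr
  fun_prop

lemma binomLaw_Iic (m : ℕ) {s : ℝ} (hs0 : 0 ≤ s) (hs1 : s ≤ 1) (x : ℝ) :
    binomLaw m s (Set.Iic x) = ENNReal.ofReal (gFn m s x) := by
  rw [binomLaw, Measure.finset_sum_apply, gFn,
    ENNReal.ofReal_sum_of_nonneg (fun k _ => by
      have := binomPMFr_nonneg (m := m) (k := k) hs0 hs1
      split <;> simp [this])]
  apply Finset.sum_congr rfl
  intro k _
  rw [Measure.smul_apply, Measure.dirac_apply' _ measurableSet_Iic, smul_eq_mul]
  by_cases h : (k : ℝ) / m ≤ x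
  · rw [if_pos h, Set.indicator_of_mem (Set.mem_Iic.mpr h), mul_one, Pi.one_apply, mul_one]
  · rw [if_neg h, Set.indicator_of_notMem (fun hc => h (Set.mem_Iic.mp hc)), mul_zero, mul_zero,
      ENNReal.ofReal_zero]

variable {μ : Measure ℝ} [IsProbabilityMeasure μ]

lemma ae_Icc (hsupp : μ (Set.Icc (0:ℝ) 1)ᶜ = 0) : ∀ᵐ s ∂μ, s ∈ Set.Icc (0:ℝ) 1 := by
  rw [ae_iff]
  have h : {a : ℝ | ¬ a ∈ Set.Icc (0:ℝ) 1} = (Set.Icc (0:ℝ) 1)ᶜ := rfl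
  rw [h, hsupp]

lemma gFn_continuous (m : ℕ) (x : ℝ) : Continuous (fun s => gFn m s x) := by
  unfold gFn binomPMFr
  fun_prop

lemma integrable_gFn (hsupp : μ (Set.Icc (0:ℝ) 1)ᶜ = 0) (m : ℕ) (x : ℝ) :
    Integrable (fun s => gFn m s x) μ := by
  apply Integrable.mono' (integrable_const (1:ℝ)) (gFn_continuous m x).aestronglyMeasurable
  filter_upwards [ae_Icc hsupp] with s hs
  rw [Real.norm_eq_abs, abs_of_nonneg (gFn_nonneg hs.1 hs.2)]
  exact gFn_le_one hs.1 hs.2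

lemma cdf_mixLaw (hsupp : μ (Set.Icc (0:ℝ) 1)ᶜ = 0) (m : ℕ) (x : ℝ) :
    cdfOf (mixLaw μ m) x = ∫ s, gFn m s x ∂μ := by
  have h1 : mixLaw μ m (Set.Iic x) = ∫⁻ s, binomLaw m s (Set.Iic x) ∂μ :=
    Measure.bind_apply measurableSet_Iic (binomLaw_measurable m).aemeasurable
  have h2 : ∫⁻ s, binomLaw m s (Set.Iic x) ∂μ = ∫⁻ s, ENNReal.ofReal (gFn m s x) ∂μ :=
    lintegral_congr_ae (by
      filter_upwards [ae_Icc hsupp] with s hs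
      exact binomLaw_Iic m hs.1 hs.2 x)
  have h3 : ENNReal.ofReal (∫ s, gFn m s x ∂μ) = ∫⁻ s, ENNReal.ofReal (gFn m s x) ∂μ :=
    ofReal_integral_eq_lintegral_ofReal (integrable_gFn hsupp m x)
      (by filter_upwards [ae_Icc hsupp] with s hs; exact gFn_nonneg hs.1 hs.2)
  rw [cdfOf, h1, h2, ← h3, ENNReal.toReal_ofReal]
  exact integral_nonneg_of_ae (by filter_upwards [ae_Icc hsupp] with s hs; exact gFn_nonneg hs.1 hs.2)

lemma cdf_base (x : ℝ) : cdfOf μ x = ∫ s, (if s ≤ x then (1:ℝ) else 0) ∂μ := by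
  have h : (fun s => if s ≤ x then (1:ℝ) else 0) = Set.indicator (Set.Iic x) (fun _ => 1) := by
    funext s
    rw [Set.indicator_apply]
    simp [Set.mem_Iic]
  rw [cdfOf, h]
  exact (integral_indicator_one measurableSet_Iic).symm

lemma integrable_ind (x : ℝ) : Integrable (fun s => if s ≤ x then (1:ℝ) else 0) μ := by
  have h : (fun s => if s ≤ x then (1:ℝ) else 0) = Set.indicator (Set.Iic x) (fun _ => 1) := by
    funext s; rw [Set.indicator_apply]; simp [Set.mem_Iic]
  rw [h]
  exact (integrable_const 1).indicator measurableSet_Iic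

/-- For every probability distribution `F` on `[0,1]`, every positive integer `m`,
and every real `p ≥ 1`, the `L_p` distance between the binomial-mixture CDF `F^{(m)}` and `F`
satisfies `(∫₀¹ |F^{(m)}(x) − F(x)|^p dx)^{1/p} ≤ (2π)^{1/(2p)} / (mp)^{1/(2p)}`. -/
theorem stmt0 (μ : Measure ℝ) [IsProbabilityMeasure μ] (hsupp : μ (Set.Icc (0:ℝ) 1)ᶜ = 0)
    (m : ℕ) (hm : 1 ≤ m) (p : ℝ) (hp : 1 ≤ p) :
    (∫ x in Set.Icc (0:ℝ) 1, |cdfOf (mixLaw μ m) x - cdfOf μ x| ^ p) ^ (1 / p)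
      ≤ (2 * π) ^ (1 / (2 * p)) / (((m : ℝ) * p) ^ (1 / (2 * p))) := by
  have hp0 : (0:ℝ) < p := lt_of_lt_of_le one_pos hp
  have hm0 : (0:ℝ) < m := by exact_mod_cast hm
  set c : ℝ := (m : ℝ) * p / 2 with hc
  have hcpos : 0 < c := by positivity
  set B : ℝ := Real.sqrt (π / c) with hB
  have hB0 : 0 ≤ B := Real.sqrt_nonneg _
  set f : ℝ → ℝ → ℝ := fun s x => gFn m s x - (if s ≤ x then 1 else 0) with hf
  -- continuity of t ↦ t^p
  have hgc : Continuous (fun t : ℝ => t ^ p) := by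
    rw [continuous_iff_continuousAt]
    intro t
    exact Real.continuousAt_rpow_const t p (Or.inr (by linarith))
  -- |f| ≤ 1 a.e.
  have hfabs : ∀ x : ℝ, ∀ᵐ s ∂μ, |f s x| ≤ 1 := by
    intro x
    filter_upwards [ae_Icc hsupp] with s hs
    have h1 := gFn_nonneg (m := m) (x := x) hs.1 hs.2
    have h2 := gFn_le_one (m := m) (x := x) hs.1 hs.2
    rw [hf, abs_le]
    by_cases hsx : s ≤ x <;> simp only [hsx, if_true, if_false] <;> constructor <;> linarith
  -- measurability of f in s
  have hfmeasM : ∀ x : ℝ, Measurable (fun s => f s x) := by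
    intro x
    apply Measurable.sub (gFn_continuous m x).measurable
    exact Measurable.ite measurableSet_Iic measurable_const measurable_const
  have hfmeas : ∀ x : ℝ, AEStronglyMeasurable (fun s => f s x) μ :=
    fun x => (hfmeasM x).aestronglyMeasurable
  have hfi : ∀ x : ℝ, Integrable (fun s => f s x) μ :=
    fun x => (integrable_gFn hsupp m x).sub (integrable_ind x)
  have hgi : ∀ x : ℝ, Integrable (fun s => |f s x| ^ p) μ := by
    intro x
    apply Integrable.mono' (integrable_const (1:ℝ))
      (hgc.measurable.comp (hfmeasM x).abs).aestronglyMeasurable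
    filter_upwards [hfabs x] with s hs
    simp only [Function.comp_apply, Real.norm_eq_abs]
    rw [abs_of_nonneg (Real.rpow_nonneg (abs_nonneg _) p)]
    exact Real.rpow_le_one (abs_nonneg _) hs (by linarith)
  -- D x expression
  have hDx : ∀ x : ℝ, cdfOf (mixLaw μ m) x - cdfOf μ x = ∫ s, f s x ∂μ := by
    intro x
    rw [cdf_mixLaw hsupp m x, cdf_base x, ← integral_sub (integrable_gFn hsupp m x) (integrable_ind x)]
  -- Jensen
  have hJensen : ∀ x : ℝ, |cdfOf (mixLaw μ m) x - cdfOf μ x| ^ p ≤ ∫ s, |f s x| ^ p ∂μ := by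
    intro x
    have h1 : |∫ s, f s x ∂μ| ≤ ∫ s, |f s x| ∂μ := by
      simpa [Real.norm_eq_abs] using norm_integral_le_integral_norm (fun s => f s x) (μ := μ)
    have h2 : (∫ s, |f s x| ∂μ) ^ p ≤ ∫ s, |f s x| ^ p ∂μ := by
      have := (convexOn_rpow hp).map_integral_le (f := fun s => |f s x|) (μ := μ)
        (hgc.continuousOn) isClosed_Ici
        (Filter.Eventually.of_forall fun s => Set.mem_Ici.mpr (abs_nonneg _))
        (hfi x).abs (by exact hgi x)
      simpa using this
    calc |cdfOf (mixLaw μ m) x - cdfOf μ x| ^ p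
        = |∫ s, f s x ∂μ| ^ p := by rw [hDx]
      _ ≤ (∫ s, |f s x| ∂μ) ^ p :=
          Real.rpow_le_rpow (abs_nonneg _) h1 (by linarith)
      _ ≤ _ := h2
  -- pointwise exponential bound on |f|^p
  have hpt : ∀ {s x : ℝ}, s ∈ Set.Icc (0:ℝ) 1 → x ∈ Set.Icc (0:ℝ) 1 →
      |f s x| ^ p ≤ Real.exp (-(c * (x - s) ^ 2)) := by
    intro s x hs hx
    have h1 := pointwise_bound m hm hs.1 hs.2 hx.1 hx.2
    have h2 : |f s x| ^ p ≤ Real.exp (-(↑m * (x - s) ^ 2) / 2) ^ p :=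
      Real.rpow_le_rpow (abs_nonneg _) h1 (by linarith)
    refine h2.trans_eq ?_
    rw [← Real.exp_mul]
    congr 1
    rw [hc]; ring
  -- measurability of the outer integrand
  have hmono1 : Monotone (fun x => cdfOf (mixLaw μ m) x) := by
    intro a b hab
    simp only [cdf_mixLaw hsupp m]
    apply integral_mono_ae (integrable_gFn hsupp m a) (integrable_gFn hsupp m b)
    filter_upwards [ae_Icc hsupp] with s hs
    exact gFn_mono hs.1 hs.2 hab
  have hmono2 : Monotone (cdfOf μ) := fun a b hab =>
    ENNReal.toReal_mono (measure_ne_top μ _) (measure_mono (Set.Iic_subset_Iic.mpr hab))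
  have hDmeas : Measurable (fun x => cdfOf (mixLaw μ m) x - cdfOf μ x) :=
    (hmono1.measurable).sub (hmono2.measurable)
  have hIm : Measurable (fun x => |cdfOf (mixLaw μ m) x - cdfOf μ x| ^ p) :=
    hgc.measurable.comp hDmeas.abs
  -- real integral to lintegral
  have hIJ : ∫ x in Set.Icc (0:ℝ) 1, |cdfOf (mixLaw μ m) x - cdfOf μ x| ^ p
      = (∫⁻ x in Set.Icc (0:ℝ) 1,
          ENNReal.ofReal (|cdfOf (mixLaw μ m) x - cdfOf μ x| ^ p)).toReal := by
    rw [integral_eq_lintegral_of_nonneg_ae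
      (ae_of_all _ fun x => Real.rpow_nonneg (abs_nonneg _) p) hIm.aestronglyMeasurable]
  -- joint measurability
  have hFmeas : Measurable (fun q : ℝ × ℝ => ENNReal.ofReal (|f q.2 q.1| ^ p)) := by
    apply Measurable.ennreal_ofReal
    apply hgc.measurable.comp
    apply Measurable.abs
    rw [hf]
    apply Measurable.sub
    · apply Finset.measurable_sum
      intro k _
      apply Measurable.mul
      · have hcont : Continuous (fun s : ℝ => binomPMFr m k s) := by
          unfold binomPMFr; fun_prop
        exact hcont.measurable.comp measurable_snd
      · exact Measurable.ite
          (measurableSet_le measurable_const measurable_fst) measurable_const measurable_const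
    · exact Measurable.ite
        (measurableSet_le measurable_snd measurable_fst) measurable_const measurable_const
  -- key estimate
  have key : (∫⁻ x in Set.Icc (0:ℝ) 1,
      ENNReal.ofReal (|cdfOf (mixLaw μ m) x - cdfOf μ x| ^ p)) ≤ ENNReal.ofReal B := by
    have hgauss : ∀ s : ℝ, Integrable (fun x => Real.exp (-(c * (x - s) ^ 2))) := by
      intro s
      have h1 := (integrable_exp_neg_mul_sq hcpos).comp_sub_right s
      simpa [neg_mul] using h1
    calc ∫⁻ x in Set.Icc (0:ℝ) 1, ENNReal.ofReal (|cdfOf (mixLaw μ m) x - cdfOf μ x| ^ p)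
        ≤ ∫⁻ x in Set.Icc (0:ℝ) 1, ∫⁻ s, ENNReal.ofReal (|f s x| ^ p) ∂μ := by
          apply lintegral_mono
          intro x
          refine le_trans (ENNReal.ofReal_le_ofReal (hJensen x)) ?_
          rw [ofReal_integral_eq_lintegral_ofReal (hgi x)
            (ae_of_all _ fun s => Real.rpow_nonneg (abs_nonneg _) p)]
      _ = ∫⁻ s, ∫⁻ x in Set.Icc (0:ℝ) 1, ENNReal.ofReal (|f s x| ^ p) ∂(volume) ∂μ := by
          exact lintegral_lintegral_swap hFmeas.aemeasurable
      _ ≤ ∫⁻ s, ENNReal.ofReal B ∂μ := by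
          apply lintegral_mono_ae
          filter_upwards [ae_Icc hsupp] with s hs
          calc ∫⁻ x in Set.Icc (0:ℝ) 1, ENNReal.ofReal (|f s x| ^ p)
              ≤ ∫⁻ x in Set.Icc (0:ℝ) 1, ENNReal.ofReal (Real.exp (-(c * (x - s) ^ 2))) := by
                apply lintegral_mono_ae
                filter_upwards [ae_restrict_mem measurableSet_Icc] with x hx
                exact ENNReal.ofReal_le_ofReal (hpt hs hx)
            _ ≤ ∫⁻ x, ENNReal.ofReal (Real.exp (-(c * (x - s) ^ 2))) :=
                setLIntegral_le_lintegral _ _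
            _ = ENNReal.ofReal (∫ x, Real.exp (-(c * (x - s) ^ 2))) :=
                (ofReal_integral_eq_lintegral_ofReal (hgauss s)
                  (ae_of_all _ fun x => (Real.exp_pos _).le)).symm
            _ = ENNReal.ofReal B := by
                congr 1
                have h1 : (fun x : ℝ => Real.exp (-(c * (x - s) ^ 2)))
                    = fun x => (fun y => Real.exp (-c * y ^ 2)) (x - s) := by
                  funext x; simp [neg_mul]
                rw [h1, integral_sub_right_eq_self (fun y => Real.exp (-c * y ^ 2)) s,
                  integral_gaussian, hB]
      _ = ENNReal.ofReal B := by rw [lintegral_const, measure_univ, mul_one]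
  -- conclude
  have hIB : ∫ x in Set.Icc (0:ℝ) 1, |cdfOf (mixLaw μ m) x - cdfOf μ x| ^ p ≤ B := by
    rw [hIJ]
    calc _ ≤ (ENNReal.ofReal B).toReal := ENNReal.toReal_mono ENNReal.ofReal_ne_top key
      _ = B := ENNReal.toReal_ofReal hB0
  have hI0 : 0 ≤ ∫ x in Set.Icc (0:ℝ) 1, |cdfOf (mixLaw μ m) x - cdfOf μ x| ^ p :=
    integral_nonneg fun x => Real.rpow_nonneg (abs_nonneg _) p
  have hRHS : (2 * π) ^ (1 / (2 * p)) / (((m : ℝ) * p) ^ (1 / (2 * p))) = B ^ (1 / p) := by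
    rw [← Real.div_rpow (by positivity) (by positivity), hB, Real.sqrt_eq_rpow,
      ← Real.rpow_mul (by positivity)]
    congr 1
    · rw [hc]; field_simp
    · ring
  rw [hRHS]
  exact Real.rpow_le_rpow hI0 hIB (by positivity)
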